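/- The fixed point (x̃, 0) with Ψ(x̃) = 0 of the Gilet map has a pair of non-real complex conjugate eigenvalues of its Jacobian if and only if σΨ'(x̃)² > (1-μ)²/(4μ); and in that case both eigenvalues have modulus √(μ(1 + σΨ'(x̃)²)), which exceeds 1 if and only if σΨ'(x̃)² > (1-μ)/μ. -/

import Mathlib

theorem gilet_complex_eigenvalues
    (Ψ : ℝ → ℝ) (hΨ : ContDiff ℝ 1 Ψ)
    (σ μ : ℝ) (hσ : 0 < σ) (hσ1 : σ < 1) (hμ : 0 < μ) (hμ1 : μ < 1)
    (xt : ℝ) (hx : Ψ xt = 0) (d : ℝ) (hd : d = deriv Ψ xt) :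
    ((∃ z : ℂ, z.im ≠ 0 ∧
        z ^ 2 - (1 + (μ : ℂ)) * z + (μ : ℂ) * (1 + (σ : ℂ) * (d : ℂ) ^ 2) = 0) ↔
      σ * d ^ 2 > (1 - μ) ^ 2 / (4 * μ)) ∧
    (∀ z : ℂ, z.im ≠ 0 →
      z ^ 2 - (1 + (μ : ℂ)) * z + (μ : ℂ) * (1 + (σ : ℂ) * (d : ℂ) ^ 2) = 0 →
      ‖z‖ = Real.sqrt (μ * (1 + σ * d ^ 2)) ∧
        (1 < ‖z‖ ↔ σ * d ^ 2 > (1 - μ) / μ)) := by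
  have key : ∀ z : ℂ, z.im ≠ 0 →
      (z ^ 2 - (1 + (μ : ℂ)) * z + (μ : ℂ) * (1 + (σ : ℂ) * (d : ℂ) ^ 2) = 0 ↔
       z.re = (1 + μ) / 2 ∧ z.im ^ 2 = μ * (1 + σ * d ^ 2) - ((1 + μ) / 2) ^ 2) := by
    intro z him
    rw [Complex.ext_iff]
    simp only [Complex.add_re, Complex.sub_re, Complex.mul_re, Complex.mul_im,
      Complex.add_im, Complex.sub_im, Complex.ofReal_re, Complex.ofReal_im,
      Complex.one_re, Complex.one_im, Complex.zero_re, Complex.zero_im, pow_two]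
    constructor
    · rintro ⟨h1, h2⟩
      have hre : (2 * z.re - (1 + μ)) * z.im = 0 := by linear_combination h2
      have hre' : z.re = (1 + μ) / 2 := by
        rcases mul_eq_zero.1 hre with h | h
        · linarith
        · exact absurd h him
      refine ⟨hre', ?_⟩
      nlinarith [h1]
    · rintro ⟨h1, h2⟩
      refine ⟨by nlinarith [h1, h2], by linear_combination (2 * z.im) * h1⟩
  constructor
  · constructor
    · rintro ⟨z, him, heq⟩
      obtain ⟨h1, h2⟩ := (key z him).1 heq
      have hpos : 0 < z.im ^ 2 := by positivity
      rw [gt_iff_lt, div_lt_iff₀ (by positivity)]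
      nlinarith
    · intro h
      rw [gt_iff_lt, div_lt_iff₀ (by positivity)] at h
      set b : ℝ := μ * (1 + σ * d ^ 2) - ((1 + μ) / 2) ^ 2 with hb
      have hbpos : 0 < b := by rw [hb]; nlinarith
      refine ⟨⟨(1 + μ) / 2, Real.sqrt b⟩, ?_, ?_⟩
      · simp only [ne_eq]
        positivity
      · rw [key _ (by simp only [ne_eq]; positivity)]
        exact ⟨rfl, Real.sq_sqrt hbpos.le⟩
  · intro z him heq
    obtain ⟨h1, h2⟩ := (key z him).1 heq
    have habs : ‖z‖ = Real.sqrt (μ * (1 + σ * d ^ 2)) := by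
      rw [Complex.norm_def, Complex.normSq_apply]
      congr 1
      nlinarith
    refine ⟨habs, ?_⟩
    rw [habs, Real.lt_sqrt (by positivity), one_pow, gt_iff_lt, div_lt_iff₀ hμ]
    constructor <;> intro <;> nlinarith
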